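/- (Lower bound for the virtual value function.) Let α ≥ 0 and β ≥ 0. For every extractor E : 𝒳 → ℱ, the virtual value function satisfies 𝒱(E) = H(Y|E(X)) − α·H(Z|(E(X),π_E(X))) − β·H(V|(E(X),π_E(X))) ≥ H(Y|X) − α·H(Z|π_E(X)) − β·H(V|π_E(X)). -/

import Mathlib

open scoped BigOperators

/-- Marginal of a joint pmf on the first coordinate: `q_X(x) = ∑ w q(x,w)`. -/
noncomputable def margX {X W : Type*} [Fintype W] (q : X × W → ℝ) (x : X) : ℝ :=
  ∑ w, q (x, w)

open Classical in
/-- `Pr[f = a, W = w] = ∑_{x : f x = a} q(x,w)`. -/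
noncomputable def jointPr {X W A : Type*} [Fintype X] (q : X × W → ℝ)
    (f : X → A) (a : A) (w : W) : ℝ :=
  ∑ x ∈ Finset.univ.filter (fun x => f x = a), q (x, w)

open Classical in
/-- `Pr[f = a] = ∑_{x : f x = a} q_X(x)`. -/
noncomputable def featPr {X W A : Type*} [Fintype X] [Fintype W] (q : X × W → ℝ)
    (f : X → A) (a : A) : ℝ :=
  ∑ x ∈ Finset.univ.filter (fun x => f x = a), margX q x

open Classical in
/-- Conditional entropy `H(W | f(X))`, natural logarithm, with the convention that
summands with `Pr[f=a, W=w] = 0` contribute `0` (automatic since `-0 * log _ = 0`). -/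
noncomputable def condEnt {X W A : Type*} [Fintype X] [Fintype W] (q : X × W → ℝ)
    (f : X → A) : ℝ :=
  ∑ a ∈ Finset.univ.image f, ∑ w,
    -(jointPr q f a w) * Real.log (jointPr q f a w / featPr q f a)

/-- `-log t` valued in `(-∞, ∞]`, with the convention `-log 0 = +∞`. -/
noncomputable def negLog (t : ℝ) : EReal := if t = 0 then ⊤ else ((-(Real.log t) : ℝ) : EReal)

/-- Cross-entropy loss `∑_{x,w} q(x,w) · (-log P(Φ(x))(w))`, valued in `(-∞, ∞]`. -/
noncomputable def condLoss {X W G : Type*} [Fintype X] [Fintype W] (q : X × W → ℝ)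
    (Φ : X → G) (P : G → W → ℝ) : EReal :=
  ∑ x, ∑ w, (q (x, w) : EReal) * negLog (P (Φ x) w)

/-- A conditional probability mass function on labels `W` with feature space `G`. -/
def IsCondPMF {G W : Type*} [Fintype W] (P : G → W → ℝ) : Prop :=
  (∀ g w, 0 ≤ P g w) ∧ ∀ g, ∑ w, P g w = 1

open Classical in
/-- The posterior predictor: `Pr[Φ=g, W=w]/Pr[Φ=g]` on features of positive probability
in the image of `Φ`, and the uniform distribution on `W` otherwise. -/
noncomputable def posteriorPred {X W G : Type*} [Fintype X] [Fintype W] (q : X × W → ℝ)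
    (Φ : X → G) (g : G) (w : W) : ℝ :=
  if g ∈ Set.range Φ ∧ 0 < featPr q Φ g then jointPr q Φ g w / featPr q Φ g
  else 1 / Fintype.card W

/-- The posterior map `π(x)(w) = q(x,w)/q_X(x)`. -/
noncomputable def postMap {X W : Type*} [Fintype W] (q : X × W → ℝ) (x : X) : W → ℝ :=
  fun w => q (x, w) / margX q x

/-- Two-variable marginal `q_{XY}` of a pmf on `X × Y × Z × V`. -/
noncomputable def qXY {X Y Z V : Type*} [Fintype Z] [Fintype V]
    (q : X × Y × Z × V → ℝ) : X × Y → ℝ :=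
  fun p => ∑ z, ∑ v, q (p.1, p.2, z, v)

/-- Two-variable marginal `q_{XZ}` of a pmf on `X × Y × Z × V`. -/
noncomputable def qXZ {X Y Z V : Type*} [Fintype Y] [Fintype V]
    (q : X × Y × Z × V → ℝ) : X × Z → ℝ :=
  fun p => ∑ y, ∑ v, q (p.1, y, p.2, v)

/-- Two-variable marginal `q_{XV}` of a pmf on `X × Y × Z × V`. -/
noncomputable def qXV {X Y Z V : Type*} [Fintype Y] [Fintype Z]
    (q : X × Y × Z × V → ℝ) : X × V → ℝ :=
  fun p => ∑ y, ∑ z, q (p.1, y, z, p.2)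

/-- The posterior feature of an extractor `E`:
`π_E(x)(y) = Pr[E = E(x), Y = y] / Pr[E = E(x)]`. -/
noncomputable def postFeat {X Y F : Type*} [Fintype X] [Fintype Y] (qxy : X × Y → ℝ)
    (E : X → F) (x : X) : Y → ℝ :=
  fun y => jointPr qxy E (E x) y / featPr qxy E (E x)

/-- The virtual value function
`𝒱(E) = H(Y|E(X)) - α·H(Z|(E(X),π_E(X))) - β·H(V|(E(X),π_E(X)))`. -/
noncomputable def virtVal {X Y Z V F : Type*}
    [Fintype X] [Fintype Y] [Fintype Z] [Fintype V]
    (α β : ℝ) (q : X × Y × Z × V → ℝ) (E : X → F) : ℝ :=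
  condEnt (qXY q) E
    - α * condEnt (qXZ q) (fun x => (E x, postFeat (qXY q) E x))
    - β * condEnt (qXV q) (fun x => (E x, postFeat (qXY q) E x))


section Aux
open Classical

/-- Elementary: `x - y ≤ x * log (x / y)` for `0 ≤ x`, `0 < y`. -/
lemma aux_sub_le_mul_log {x y : ℝ} (hx : 0 ≤ x) (hy : 0 < y) :
    x - y ≤ x * Real.log (x / y) := by
  rcases eq_or_lt_of_le hx with h | h
  · simp [← h]; positivity
  · have h1 : Real.log (y / x) ≤ y / x - 1 := Real.log_le_sub_one_of_pos (by positivity)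
    have h2 : Real.log (x / y) = - Real.log (y / x) := by
      rw [← Real.log_inv]; congr 1; field_simp
    have h3 : x * Real.log (y / x) ≤ x * (y / x - 1) :=
      mul_le_mul_of_nonneg_left h1 (le_of_lt h)
    have h4 : x * (y / x - 1) = y - x := by field_simp
    have h5 : x * Real.log (x / y) = -(x * Real.log (y / x)) := by rw [h2]; ring
    linarith

/-- Log-sum inequality. -/
lemma aux_log_sum {ι : Type*} (s : Finset ι) (a b : ι → ℝ)
    (ha : ∀ i ∈ s, 0 ≤ a i) (hb : ∀ i ∈ s, 0 ≤ b i)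
    (hab : ∀ i ∈ s, b i = 0 → a i = 0) :
    (∑ i ∈ s, a i) * Real.log ((∑ i ∈ s, a i) / (∑ i ∈ s, b i))
      ≤ ∑ i ∈ s, a i * Real.log (a i / b i) := by
  set A := ∑ i ∈ s, a i with hA
  set B := ∑ i ∈ s, b i with hB
  have hA0 : 0 ≤ A := Finset.sum_nonneg ha
  have hB0 : 0 ≤ B := Finset.sum_nonneg hb
  rcases eq_or_lt_of_le hB0 with hBz | hBpos
  · -- B = 0 ⇒ all b = 0 ⇒ all a = 0
    have hb0 : ∀ i ∈ s, b i = 0 :=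
      (Finset.sum_eq_zero_iff_of_nonneg hb).1 hBz.symm
    have ha0 : ∀ i ∈ s, a i = 0 := fun i hi => hab i hi (hb0 i hi)
    have : A = 0 := Finset.sum_eq_zero ha0
    rw [this, Finset.sum_eq_zero (fun i hi => by rw [ha0 i hi]; ring)]
    simp
  rcases eq_or_lt_of_le hA0 with hAz | hApos
  · rw [← hAz]
    have ha0 : ∀ i ∈ s, a i = 0 :=
      (Finset.sum_eq_zero_iff_of_nonneg ha).1 hAz.symm
    rw [Finset.sum_eq_zero (fun i hi => by rw [ha0 i hi]; ring)]
    simp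
  -- main case: A > 0, B > 0
  have key : ∀ i ∈ s, a i * Real.log (A / B) + (a i - b i * (A / B))
      ≤ a i * Real.log (a i / b i) := by
    intro i hi
    rcases eq_or_lt_of_le (hb i hi) with hbz | hbpos
    · have haz : a i = 0 := hab i hi hbz.symm
      simp [haz, ← hbz]
    · rcases eq_or_lt_of_le (ha i hi) with haz | hapos
      · have hb2 : 0 ≤ b i * (A / B) := by positivity
        rw [← haz]
        simp only [zero_mul, zero_sub, zero_add]
        linarith
      · have h1 : a i - b i * (A / B) ≤ a i * Real.log (a i / (b i * (A / B))) :=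
          aux_sub_le_mul_log (ha i hi) (by positivity)
        have h2 : Real.log (a i / (b i * (A / B)))
            = Real.log (a i / b i) - Real.log (A / B) := by
          rw [← Real.log_div (by positivity) (by positivity)]
          congr 1
          field_simp
        rw [h2] at h1
        have h4 : a i * (Real.log (a i / b i) - Real.log (A / B))
            = a i * Real.log (a i / b i) - a i * Real.log (A / B) := by ring
        linarith
  have hsum := Finset.sum_le_sum key
  have hL : ∑ i ∈ s, (a i * Real.log (A / B) + (a i - b i * (A / B)))
      = A * Real.log (A / B) := by
    rw [Finset.sum_add_distrib, ← Finset.sum_mul, Finset.sum_sub_distrib,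
      ← Finset.sum_mul, ← hA, ← hB]
    field_simp
    ring
  linarith [hsum, hL.symm.le]

lemma featPr_eq_sum {X W A : Type*} [Fintype X] [Fintype W] (q : X × W → ℝ)
    (f : X → A) (a : A) : featPr q f a = ∑ w, jointPr q f a w := by
  unfold featPr margX jointPr
  rw [Finset.sum_comm]

lemma jointPr_nonneg {X W A : Type*} [Fintype X] (q : X × W → ℝ)
    (hq : ∀ p, 0 ≤ q p) (f : X → A) (a : A) (w : W) : 0 ≤ jointPr q f a w :=
  Finset.sum_nonneg fun _ _ => hq _

lemma jointPr_le_featPr {X W A : Type*} [Fintype X] [Fintype W] (q : X × W → ℝ)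
    (hq : ∀ p, 0 ≤ q p) (f : X → A) (a : A) (w : W) :
    jointPr q f a w ≤ featPr q f a := by
  rw [featPr_eq_sum]
  exact Finset.single_le_sum (fun w _ => jointPr_nonneg q hq f a w) (Finset.mem_univ w)

/-- Conditioning on a finer feature gives lower (or equal) conditional entropy:
`H(W | h(f(X))) ≥ H(W | f(X))` ... stated as `condEnt q f ≤ condEnt q (h ∘ f)`. -/
lemma condEnt_comp_le {X W A B : Type*} [Fintype X] [Fintype W]
    (q : X × W → ℝ) (hq : ∀ p, 0 ≤ q p) (f : X → A) (h : A → B) :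
    condEnt q f ≤ condEnt q (fun x => h (f x)) := by
  classical
  set g : X → B := fun x => h (f x) with hg
  -- partition image f according to h
  have hmaps : ∀ a ∈ Finset.univ.image f, h a ∈ Finset.univ.image g := by
    intro a ha
    obtain ⟨x, _, rfl⟩ := Finset.mem_image.1 ha
    exact Finset.mem_image.2 ⟨x, Finset.mem_univ x, rfl⟩
  unfold condEnt
  rw [← Finset.sum_fiberwise_of_maps_to hmaps]
  apply Finset.sum_le_sum
  intro b hb
  set t := (Finset.univ.image f).filter (fun a => h a = b) with ht
  -- fiber decomposition of jointPr
  have hJ : ∀ w, jointPr q g b w = ∑ a ∈ t, jointPr q f a w := by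
    intro w
    have hmaps2 : ∀ x ∈ Finset.univ.filter (fun x => g x = b), f x ∈ t := by
      intro x hx
      simp only [Finset.mem_filter, Finset.mem_univ, true_and] at hx
      exact Finset.mem_filter.2 ⟨Finset.mem_image.2 ⟨x, Finset.mem_univ x, rfl⟩, hx⟩
    have := Finset.sum_fiberwise_of_maps_to hmaps2 (fun x => q (x, w))
    unfold jointPr
    rw [← this]
    apply Finset.sum_congr rfl
    intro a ha
    apply Finset.sum_congr _ (fun _ _ => rfl)
    ext x
    simp only [Finset.mem_filter, Finset.mem_univ, true_and]
    constructor
    · rintro ⟨_, h2⟩; exact h2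
    · intro h2
      refine ⟨?_, h2⟩
      have := (Finset.mem_filter.1 ha).2
      rw [hg]
      simpa [h2] using this
  have hF : featPr q g b = ∑ a ∈ t, featPr q f a := by
    rw [featPr_eq_sum]
    simp_rw [hJ]
    rw [Finset.sum_comm]
    exact Finset.sum_congr rfl fun a _ => (featPr_eq_sum q f a).symm
  -- compare entropies via log-sum inequality, per w
  rw [Finset.sum_comm]
  apply Finset.sum_le_sum
  intro w _
  rw [hJ w, hF]
  have := aux_log_sum t (fun a => jointPr q f a w) (fun a => featPr q f a)
    (fun a _ => jointPr_nonneg q hq f a w)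
    (fun a _ => le_trans (jointPr_nonneg q hq f a w) (jointPr_le_featPr q hq f a w))
    (fun a _ hz => le_antisymm (hz ▸ jointPr_le_featPr q hq f a w)
      (jointPr_nonneg q hq f a w))
  have hrw : ∑ a ∈ t, -(jointPr q f a w) * Real.log (jointPr q f a w / featPr q f a)
      = -∑ a ∈ t, jointPr q f a w * Real.log (jointPr q f a w / featPr q f a) := by
    rw [← Finset.sum_neg_distrib]
    exact Finset.sum_congr rfl fun a _ => by ring
  rw [hrw]
  nlinarith [this]

/-- Lower bound for the virtual value function:
`𝒱(E) ≥ H(Y|X) - α·H(Z|π_E(X)) - β·H(V|π_E(X))` for every extractor `E`. -/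
theorem statement6 {X Y Z V F : Type*}
    [Fintype X] [Nonempty X] [Fintype Y] [Nonempty Y]
    [Fintype Z] [Nonempty Z] [Fintype V] [Nonempty V]
    (α β : ℝ) (hα : 0 ≤ α) (hβ : 0 ≤ β)
    (q : X × Y × Z × V → ℝ) (hq0 : ∀ p, 0 ≤ q p) (hq1 : ∑ p, q p = 1)
    (hqX : ∀ x, 0 < margX (qXY q) x) (E : X → F) :
    condEnt (qXY q) id
      - α * condEnt (qXZ q) (postFeat (qXY q) E)
      - β * condEnt (qXV q) (postFeat (qXY q) E)
    ≤ virtVal α β q E := by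
  have hXY : ∀ p, 0 ≤ qXY q p := fun p =>
    Finset.sum_nonneg fun _ _ => Finset.sum_nonneg fun _ _ => hq0 _
  have hXZ : ∀ p, 0 ≤ qXZ q p := fun p =>
    Finset.sum_nonneg fun _ _ => Finset.sum_nonneg fun _ _ => hq0 _
  have hXV : ∀ p, 0 ≤ qXV q p := fun p =>
    Finset.sum_nonneg fun _ _ => Finset.sum_nonneg fun _ _ => hq0 _
  have h1 : condEnt (qXY q) id ≤ condEnt (qXY q) E :=
    condEnt_comp_le (qXY q) hXY id E
  have h2 : condEnt (qXZ q) (fun x => (E x, postFeat (qXY q) E x))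
      ≤ condEnt (qXZ q) (postFeat (qXY q) E) :=
    condEnt_comp_le (qXZ q) hXZ (fun x => (E x, postFeat (qXY q) E x)) Prod.snd
  have h3 : condEnt (qXV q) (fun x => (E x, postFeat (qXY q) E x))
      ≤ condEnt (qXV q) (postFeat (qXY q) E) :=
    condEnt_comp_le (qXV q) hXV (fun x => (E x, postFeat (qXY q) E x)) Prod.snd
  have h2' := mul_le_mul_of_nonneg_left h2 hα
  have h3' := mul_le_mul_of_nonneg_left h3 hβ
  unfold virtVal
  linarith
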